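/- Let l, h > 0 and ψg ∈ ℂ. Then there exist unique complex numbers A, B, D satisfying the three equations A + B + ψg = 0, A e^{(1+i)h} + B e^{-(1+i)h} = D e^{-(1+i)h/l}, and A e^{(1+i)h} - B e^{-(1+i)h} = -l D e^{-(1+i)h/l}. -/

import Mathlib

open Complex

theorem one_jump_coefficients_existUnique (l h : ℝ) (hl : 0 < l) (hh : 0 < h) (ψg : ℂ) :
    ∃! p : ℂ × ℂ × ℂ,
      p.1 + p.2.1 + ψg = 0 ∧
      p.1 * Complex.exp ((1 + Complex.I) * h) + p.2.1 * Complex.exp (-(1 + Complex.I) * h)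
        = p.2.2 * Complex.exp (-(1 + Complex.I) * h / l) ∧
      p.1 * Complex.exp ((1 + Complex.I) * h) - p.2.1 * Complex.exp (-(1 + Complex.I) * h)
        = -(l : ℂ) * p.2.2 * Complex.exp (-(1 + Complex.I) * h / l) := by
  set u : ℂ := Complex.exp ((1 + Complex.I) * h) with hu
  set v : ℂ := Complex.exp (-(1 + Complex.I) * h) with hv
  set E : ℂ := Complex.exp (-(1 + Complex.I) * h / l) with hEdef
  have hu0 : u ≠ 0 := Complex.exp_ne_zero _
  have hv0 : v ≠ 0 := Complex.exp_ne_zero _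
  have hE0 : E ≠ 0 := Complex.exp_ne_zero _
  have huv : u * v = 1 := by
    rw [hu, hv, ← Complex.exp_add]
    rw [show (1 + Complex.I) * (h:ℂ) + -(1 + Complex.I) * (h:ℂ) = 0 by ring, Complex.exp_zero]
  set c : ℂ := (1 + (l:ℂ)) * u + (1 - (l:ℂ)) * v with hcdef
  have hc : c ≠ 0 := by
    intro hcon
    have h1 : ((1:ℂ) + l) * u = ((l:ℂ) - 1) * v := by
      rw [hcdef] at hcon; linear_combination hcon
    have h2 : ‖((1:ℂ) + l) * u‖ = ‖((l:ℂ) - 1) * v‖ := by rw [h1]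
    have hcast1 : ((1:ℂ) + l) = ((1 + l : ℝ) : ℂ) := by push_cast; ring
    have hcast2 : ((l:ℂ) - 1) = ((l - 1 : ℝ) : ℂ) := by push_cast; ring
    rw [hcast1, hcast2, norm_mul, norm_mul, hu, hv, Complex.norm_exp, Complex.norm_exp,
      Complex.norm_real, Complex.norm_real, Real.norm_eq_abs, Real.norm_eq_abs] at h2
    have hre1 : ((1 + Complex.I) * (h:ℂ)).re = h := by simp
    have hre2 : (-(1 + Complex.I) * (h:ℂ)).re = -h := by simp
    rw [hre1, hre2] at h2
    have hlt : |l - 1| < 1 + l := abs_lt.mpr ⟨by linarith, by linarith⟩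
    have habs1 : |1 + l| = 1 + l := abs_of_pos (by linarith)
    rw [habs1] at h2
    have he1 : h + 1 ≤ Real.exp h := Real.add_one_le_exp h
    have he2 : Real.exp (-h) * Real.exp h = 1 := by rw [← Real.exp_add]; simp
    have hexph : 1 < Real.exp h := by linarith
    have hexpnh : Real.exp (-h) < 1 := by nlinarith [Real.exp_pos (-h)]
    have hb1 : |l - 1| * Real.exp (-h) ≤ |l - 1| :=
      mul_le_of_le_one_right (abs_nonneg _) hexpnh.le
    nlinarith [Real.exp_pos h]
  set D : ℂ := -2 * ψg / (E * c) with hD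
  have hDc : D * (E * c) = -2 * ψg := by
    rw [hD]; field_simp
  refine ⟨⟨(1 - (l:ℂ)) * D * E * v / 2, (1 + (l:ℂ)) * D * E * u / 2, D⟩, ⟨?_, ?_, ?_⟩, ?_⟩
  · show (1 - (l:ℂ)) * D * E * v / 2 + (1 + (l:ℂ)) * D * E * u / 2 + ψg = 0
    linear_combination hDc / 2
  · show (1 - (l:ℂ)) * D * E * v / 2 * u + (1 + (l:ℂ)) * D * E * u / 2 * v = D * E
    linear_combination D * E * huv
  · show (1 - (l:ℂ)) * D * E * v / 2 * u - (1 + (l:ℂ)) * D * E * u / 2 * v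
      = -(l:ℂ) * D * E
    linear_combination (-(l:ℂ)) * D * E * huv
  · rintro ⟨a, b, d⟩ ⟨e1, e2, e3⟩
    simp only at e1 e2 e3
    have ha : a = (1 - (l:ℂ)) * d * E * v / 2 := by
      linear_combination (v / 2) * e2 + (v / 2) * e3 - a * huv
    have hb : b = (1 + (l:ℂ)) * d * E * u / 2 := by
      linear_combination (u / 2) * e2 - (u / 2) * e3 - b * huv
    have hdc : d * (E * c) = -2 * ψg := by
      rw [hcdef]; linear_combination (2 : ℂ) * e1 - 2 * ha - 2 * hb
    have hd : d = D := by
      have := mul_right_cancel₀ (mul_ne_zero hE0 hc) (hdc.trans hDc.symm)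
      exact this
    refine Prod.ext ?_ (Prod.ext ?_ ?_) <;> simp [ha, hb, hd]
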